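/- If (X, w) is a weighted unitary t-design in U(d) (t ≥ 1), then |X| ≥ dimHom(d, ⌈t/2⌉, ⌊t/2⌋). -/

import Mathlib

open MeasureTheory

noncomputable section

/-- `U(d)`: the group of `d × d` complex unitary matrices. -/
abbrev UG (d : ℕ) := Matrix.unitaryGroup (Fin d) ℂ

instance (d : ℕ) : MeasurableSpace (UG d) := borel _
instance (d : ℕ) : BorelSpace (UG d) := ⟨rfl⟩

/-- `Hom(r,s)`: the complex span of the monomial functions on `U(d)` that are homogeneous of
degree `r` in the entries of `U` and of degree `s` in the entries of `U*` (conjugates). -/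
def homSpace (d r s : ℕ) : Submodule ℂ (UG d → ℂ) :=
  Submodule.span ℂ
    {f : UG d → ℂ | ∃ (i j : Fin r → Fin d) (p q : Fin s → Fin d),
      f = fun U : UG d => (∏ k, (U : Matrix (Fin d) (Fin d) ℂ) (i k) (j k)) *
        ∏ k, (starRingEnd ℂ) ((U : Matrix (Fin d) (Fin d) ℂ) (p k) (q k))}

/-- A nonempty finite subset `X ⊆ U(d)` is a unitary `t`-design (with respect to the Haar
probability measure `μ`) if it averages every `f ∈ Hom(t,t)` correctly. -/
def IsUnitaryDesign (d t : ℕ) (μ : Measure (UG d)) (X : Finset (UG d)) : Prop :=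
  X.Nonempty ∧ ∀ f ∈ homSpace d t t,
    (1 / (X.card : ℂ)) * ∑ U ∈ X, f U = ∫ U, f U ∂μ

/-- `|tr(U* M)|²`, the squared trace inner product of two unitaries. -/
def trIP {d : ℕ} (U M : UG d) : ℝ :=
  ‖Matrix.trace (star (U : Matrix (Fin d) (Fin d) ℂ) *
    (M : Matrix (Fin d) (Fin d) ℂ))‖ ^ 2

/-- A weighted unitary `t`-design: a nonempty finite set with positive weights summing to `1`
that averages every `f ∈ Hom(t,t)` correctly. -/
def IsWeightedDesign (d t : ℕ) (μ : Measure (UG d)) (X : Finset (UG d)) (w : UG d → ℝ) : Prop :=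
  X.Nonempty ∧ (∀ U ∈ X, 0 < w U) ∧ (∑ U ∈ X, w U = 1) ∧
    ∀ f ∈ homSpace d t t, ∑ U ∈ X, (w U : ℂ) * f U = ∫ U, f U ∂μ

lemma continuous_of_mem_homSpace {d r s : ℕ} {f : UG d → ℂ} (hf : f ∈ homSpace d r s) :
    Continuous f := by
  induction hf using Submodule.span_induction with
  | mem g hg =>
    obtain ⟨i, j, p, q, rfl⟩ := hg
    exact (continuous_finset_prod _ fun k _ =>
        Continuous.matrix_elem continuous_subtype_val _ _).mul
      (continuous_finset_prod _ fun k _ =>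
        Complex.continuous_conj.comp (Continuous.matrix_elem continuous_subtype_val _ _))
  | zero => exact continuous_const
  | add _ _ _ _ hf hg => exact hf.add hg
  | smul c _ _ hf => exact hf.const_smul c

lemma bounded_of_mem_homSpace {d r s : ℕ} {f : UG d → ℂ} (hf : f ∈ homSpace d r s) :
    ∃ C : ℝ, ∀ U, ‖f U‖ ≤ C := by
  induction hf using Submodule.span_induction with
  | mem g hg =>
    obtain ⟨i, j, p, q, rfl⟩ := hg
    refine ⟨1, fun U => ?_⟩
    rw [norm_mul]
    have h1 : ∀ (a b : Fin d), ‖(U : Matrix (Fin d) (Fin d) ℂ) a b‖ ≤ 1 :=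
      fun a b => entry_norm_bound_of_unitary U.2 a b
    have hb : ∀ (m : ℕ) (i j : Fin m → Fin d),
        ‖∏ k, (U : Matrix (Fin d) (Fin d) ℂ) (i k) (j k)‖ ≤ 1 := by
      intro m i j
      rw [norm_prod]
      exact Finset.prod_le_one (fun k _ => norm_nonneg _) (fun k _ => h1 _ _)
    have h2 : ‖∏ k, (starRingEnd ℂ) ((U : Matrix (Fin d) (Fin d) ℂ) (p k) (q k))‖
        ≤ 1 := by
      rw [norm_prod]
      refine Finset.prod_le_one (fun k _ => norm_nonneg _) (fun k _ => ?_)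
      rw [Complex.norm_conj]; exact h1 _ _
    calc ‖_‖ * ‖_‖ ≤ 1 * 1 :=
          mul_le_mul (hb r i j) h2 (norm_nonneg _) zero_le_one
      _ = 1 := one_mul 1
  | zero => exact ⟨0, fun U => by simp⟩
  | add f g _ _ hf hg =>
    obtain ⟨C1, h1⟩ := hf; obtain ⟨C2, h2⟩ := hg
    exact ⟨C1 + C2, fun U => le_trans (norm_add_le _ _) (add_le_add (h1 U) (h2 U))⟩
  | smul c f _ hf =>
    obtain ⟨C, h⟩ := hf
    refine ⟨‖c‖ * C, fun U => ?_⟩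
    have : (c • f) U = c * f U := rfl
    rw [this, norm_mul]
    exact mul_le_mul_of_nonneg_left (h U) (norm_nonneg _)

lemma conj_mem_homSpace {d r s : ℕ} {f : UG d → ℂ} (hf : f ∈ homSpace d r s) :
    (fun U => (starRingEnd ℂ) (f U)) ∈ homSpace d s r := by
  induction hf using Submodule.span_induction with
  | mem g hg =>
    obtain ⟨i, j, p, q, rfl⟩ := hg
    refine Submodule.subset_span ⟨p, q, i, j, ?_⟩
    funext U
    simp only [map_mul, map_prod, Complex.conj_conj]
    ring
  | zero =>
    have : (fun U : UG d => (starRingEnd ℂ) ((0 : UG d → ℂ) U)) = 0 := by funext U; simp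
    rw [this]; exact Submodule.zero_mem _
  | add f g _ _ hf hg =>
    have : (fun U => (starRingEnd ℂ) ((f + g) U)) =
        (fun U => (starRingEnd ℂ) (f U)) + (fun U => (starRingEnd ℂ) (g U)) := by
      funext U; simp [map_add]
    rw [this]; exact Submodule.add_mem _ hf hg
  | smul c f _ hf =>
    have : (fun U => (starRingEnd ℂ) ((c • f) U)) =
        (starRingEnd ℂ) c • fun U => (starRingEnd ℂ) (f U) := by
      funext U; simp [map_mul]
    rw [this]; exact Submodule.smul_mem _ _ hf

lemma mul_mem_homSpace {d r s r' s' : ℕ} {f g : UG d → ℂ}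
    (hf : f ∈ homSpace d r s) (hg : g ∈ homSpace d r' s') :
    (fun U => f U * g U) ∈ homSpace d (r + r') (s + s') := by
  induction hf using Submodule.span_induction with
  | mem f hfm =>
    induction hg using Submodule.span_induction with
    | mem g hgm =>
      obtain ⟨i, j, p, q, rfl⟩ := hfm
      obtain ⟨i', j', p', q', rfl⟩ := hgm
      refine Submodule.subset_span
        ⟨Fin.append i i', Fin.append j j', Fin.append p p', Fin.append q q', ?_⟩
      funext U
      simp only [Fin.prod_univ_add, Fin.append_left, Fin.append_right]
      ring
    | zero =>
      have : (fun U => f U * (0 : UG d → ℂ) U) = 0 := by funext U; simp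
      rw [this]; exact Submodule.zero_mem _
    | add g₁ g₂ _ _ h1 h2 =>
      have : (fun U => f U * (g₁ + g₂) U) =
          (fun U => f U * g₁ U) + fun U => f U * g₂ U := by
        funext U; simp [Pi.add_apply]; ring
      rw [this]; exact Submodule.add_mem _ h1 h2
    | smul c g₁ _ h1 =>
      have : (fun U => f U * (c • g₁) U) = c • fun U => f U * g₁ U := by
        funext U; simp [Pi.smul_apply, smul_eq_mul]; ring
      rw [this]; exact Submodule.smul_mem _ _ h1
  | zero =>
    have : (fun U => (0 : UG d → ℂ) U * g U) = 0 := by funext U; simp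
    rw [this]; exact Submodule.zero_mem _
  | add f₁ f₂ _ _ h1 h2 =>
    have : (fun U => (f₁ + f₂) U * g U) =
        (fun U => f₁ U * g U) + fun U => f₂ U * g U := by
      funext U; simp [Pi.add_apply]; ring
    rw [this]; exact Submodule.add_mem _ h1 h2
  | smul c f₁ _ h1 =>
    have : (fun U => (c • f₁) U * g U) = c • fun U => f₁ U * g U := by
      funext U; simp [Pi.smul_apply, smul_eq_mul]; ring
    rw [this]; exact Submodule.smul_mem _ _ h1
theorem stmt_17 (d t : ℕ) (ht : 1 ≤ t)
    (μ : Measure (UG d)) [μ.IsHaarMeasure] [IsProbabilityMeasure μ]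
    (X : Finset (UG d)) (w : UG d → ℝ)
    (hX : IsWeightedDesign d t μ X w) :
    Module.finrank ℂ (homSpace d ((t + 1) / 2) (t / 2)) ≤ X.card := by
  classical
  obtain ⟨hne, hpos, hsum, hdes⟩ := hX
  set r := (t + 1) / 2 with hr
  set s := t / 2 with hs
  let E : homSpace d r s →ₗ[ℂ] (↥X → ℂ) :=
    { toFun := fun f x => (f : UG d → ℂ) x
      map_add' := fun f g => rfl
      map_smul' := fun c f => rfl }
  have hinj : Function.Injective E := by
    rw [← LinearMap.ker_eq_bot, LinearMap.ker_eq_bot']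
    intro f hf0
    have hvan : ∀ U ∈ X, (f : UG d → ℂ) U = 0 := by
      intro U hU
      exact congrFun hf0 ⟨U, hU⟩
    -- the function |f|² lies in Hom(t,t)
    have hmem := mul_mem_homSpace f.2 (conj_mem_homSpace f.2)
    have hrs : r + s = t := by omega
    have hsr : s + r = t := by omega
    rw [hrs, hsr] at hmem
    have hdg := hdes _ hmem
    have hzero : ∑ U ∈ X, (w U : ℂ) *
        ((f : UG d → ℂ) U * (starRingEnd ℂ) ((f : UG d → ℂ) U)) = 0 := by
      refine Finset.sum_eq_zero fun U hU => ?_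
      rw [hvan U hU]; ring
    rw [hzero] at hdg
    -- the integral of normSq ∘ f is zero
    have hint : ∫ U, Complex.normSq ((f : UG d → ℂ) U) ∂μ = 0 := by
      have h1 : ∫ U, (((Complex.normSq ((f : UG d → ℂ) U)) : ℝ) : ℂ) ∂μ = 0 := by
        rw [← hdg.symm]
        congr 1
        funext U
        rw [Complex.mul_conj]
      rw [show ((fun U => (((Complex.normSq ((f : UG d → ℂ) U)) : ℝ) : ℂ)) =
          fun U => (RCLike.ofReal (Complex.normSq ((f : UG d → ℂ) U)) : ℂ)) from rfl,
        integral_ofReal] at h1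
      exact RCLike.ofReal_eq_zero.mp h1
    -- normSq ∘ f is continuous, nonneg and integrable
    have hfc : Continuous (f : UG d → ℂ) := continuous_of_mem_homSpace f.2
    have hcont : Continuous fun U => Complex.normSq ((f : UG d → ℂ) U) :=
      Complex.continuous_normSq.comp hfc
    have hnonneg : 0 ≤ fun U => Complex.normSq ((f : UG d → ℂ) U) :=
      fun U => Complex.normSq_nonneg _
    have hintg : Integrable (fun U => Complex.normSq ((f : UG d → ℂ) U)) μ := by
      obtain ⟨C, hC⟩ := bounded_of_mem_homSpace f.2
      refine Integrable.mono' (integrable_const (C ^ 2)) hcont.aestronglyMeasurable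
        (Filter.Eventually.of_forall fun U => ?_)
      rw [Real.norm_eq_abs, abs_of_nonneg (Complex.normSq_nonneg _), Complex.normSq_eq_norm_sq]
      have h0 : (0 : ℝ) ≤ ‖(f : UG d → ℂ) U‖ := norm_nonneg _
      exact pow_le_pow_left₀ h0 (hC U) 2
    have hae := (integral_eq_zero_iff_of_nonneg hnonneg hintg).mp hint
    have heq : (fun U => Complex.normSq ((f : UG d → ℂ) U)) = fun _ => 0 :=
      (Continuous.ae_eq_iff_eq μ hcont continuous_const).mp hae
    have : (f : UG d → ℂ) = 0 := by
      funext U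
      exact Complex.normSq_eq_zero.mp (congrFun heq U)
    exact Subtype.ext this
  have hfin := LinearMap.finrank_le_finrank_of_injective hinj
  simpa [Module.finrank_pi, Fintype.card_coe] using hfin
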